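/- Let M and M' be ℚ-vector spaces, ν : M → ℚ a ℚ-linear functional, φ : M → M' a ℚ-linear map, and q ≥ 1. Let w ∈ M' and define φ' : M → M' by φ'(f) = φ(f) + ν(f)·w. Then Res_{ν,φ'} = Res_{ν,φ} as ℚ-linear maps ⋀^q M → ⋀^{q−1} M'. -/

import Mathlib

open ExteriorAlgebra

set_option linter.deprecated false
set_option maxHeartbeats 1000000

section Helpers

lemma succAbove_val' {m : ℕ} (p : Fin (m+1)) (q : Fin m) :
    ((p.succAbove q : Fin (m+1)) : ℕ) = if (q:ℕ) < (p:ℕ) then (q:ℕ) else (q:ℕ)+1 := by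
  rw [Fin.succAbove]
  split_ifs with h1 h2 h2
  · rfl
  · exact absurd (by simpa [Fin.lt_def] using h1) h2
  · exact absurd (by simpa [Fin.lt_def] using h2) h1
  · rfl

/-- the companion index for the swap involution -/
def swapJ {m : ℕ} (i : Fin (m+2)) (j : Fin (m+1)) : Fin (m+1) :=
  if _ : (j:ℕ) < (i:ℕ) then ⟨(i:ℕ) - 1, by omega⟩ else ⟨(i:ℕ), by omega⟩

lemma swapJ_val {m : ℕ} (i : Fin (m+2)) (j : Fin (m+1)) :
    ((swapJ i j : Fin (m+1)) : ℕ) = if (j:ℕ) < (i:ℕ) then (i:ℕ)-1 else (i:ℕ) := by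
  rw [swapJ]; split_ifs <;> rfl

lemma swap_spec1 {m : ℕ} (i : Fin (m+2)) (j : Fin (m+1)) :
    (i.succAbove j).succAbove (swapJ i j) = i := by
  have hk := succAbove_val' i j
  apply Fin.ext
  rw [succAbove_val', swapJ_val]
  split_ifs at hk ⊢ <;> omega

lemma swap_spec2 {m : ℕ} (i : Fin (m+2)) (j : Fin (m+1)) :
    swapJ (i.succAbove j) (swapJ i j) = j := by
  have hk := succAbove_val' i j
  apply Fin.ext
  rw [swapJ_val, swapJ_val]
  split_ifs at hk ⊢ <;> omega

lemma swap_spec3 {m : ℕ} (i : Fin (m+2)) (j : Fin (m+1)) :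
    (-1:ℚ)^((i.succAbove j : Fin (m+2)):ℕ) * (-1)^((swapJ i j : Fin (m+1)):ℕ)
      = -((-1)^(i:ℕ) * (-1)^(j:ℕ)) := by
  rw [succAbove_val', swapJ_val]
  split_ifs with h
  · obtain ⟨i0, hi0⟩ : ∃ i0, (i:ℕ) = i0 + 1 := ⟨(i:ℕ)-1, by omega⟩
    rw [show (i:ℕ) - 1 = i0 by omega, hi0, pow_succ]
    ring
  · rw [pow_succ]
    ring

lemma swap_comp {m : ℕ} (i : Fin (m+2)) (j : Fin (m+1)) :
    i.succAbove ∘ j.succAbove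
      = (i.succAbove j).succAbove ∘ (swapJ i j).succAbove := by
  have key : ∀ (a : Fin (m+2)) (b : Fin (m+1)),
      Set.range (a.succAbove ∘ b.succAbove) = ({a, a.succAbove b}ᶜ : Set (Fin (m+2))) := by
    intro a b
    rw [Set.range_comp, Fin.range_succAbove]
    ext x
    simp only [Set.mem_image, Set.mem_compl_iff, Set.mem_singleton_iff, Set.mem_insert_iff]
    constructor
    · rintro ⟨y, hy, rfl⟩
      push_neg
      exact ⟨Fin.succAbove_ne a y, fun h => hy (a.succAbove_right_injective h)⟩
    · intro hx
      push_neg at hx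
      obtain ⟨y, rfl⟩ := Fin.exists_succAbove_eq hx.1
      exact ⟨y, fun h => hx.2 (by rw [h]), rfl⟩
  have h1 : StrictMono (i.succAbove ∘ j.succAbove) :=
    (Fin.strictMono_succAbove i).comp (Fin.strictMono_succAbove j)
  have h2 : StrictMono ((i.succAbove j).succAbove ∘ (swapJ i j).succAbove) :=
    (Fin.strictMono_succAbove _).comp (Fin.strictMono_succAbove _)
  refine (h1.range_inj h2).mp ?_
  rw [key, key, swap_spec1, Set.pair_comm]

/-- Expanding an alternating map where each argument is perturbed by a multiple of a
fixed vector `w`: only terms with at most one `w` survive. -/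
lemma alt_expand {N N₂ : Type*} [AddCommGroup N] [Module ℚ N] [AddCommGroup N₂] [Module ℚ N₂]
    {n : ℕ} (F : N [⋀^Fin n]→ₗ[ℚ] N₂) (w : N) (c : Fin n → ℚ) (a : Fin n → N) :
    F (fun j => a j + c j • w) = F a + ∑ j, c j • F (Function.update a j w) := by
  have main : ∀ (s : Finset (Fin n)) (a : Fin n → N),
      F (fun j => if j ∈ s then a j + c j • w else a j)
        = F a + ∑ j ∈ s, c j • F (Function.update a j w) := by
    intro s
    induction s using Finset.induction with
    | empty => intro a; simp
    | @insert j0 s hj0 ih =>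
      intro a
      have hv : (fun j => if j ∈ insert j0 s then a j + c j • w else a j)
          = Function.update (fun j => if j ∈ s then a j + c j • w else a j) j0
              (a j0 + c j0 • w) := by
        funext j
        rcases eq_or_ne j j0 with rfl | hne
        · simp [hj0]
        · simp [Function.update_of_ne hne, Finset.mem_insert, hne]
      have hupd1 : Function.update (fun j => if j ∈ s then a j + c j • w else a j) j0 (a j0)
          = fun j => if j ∈ s then a j + c j • w else a j := by
        funext j
        rcases eq_or_ne j j0 with rfl | hne
        · simp [hj0]
        · simp [Function.update_of_ne hne]
      have hupd2 : Function.update (fun j => if j ∈ s then a j + c j • w else a j) j0 w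
          = fun j => if j ∈ s then Function.update a j0 w j + c j • w
              else Function.update a j0 w j := by
        funext j
        rcases eq_or_ne j j0 with rfl | hne
        · simp [hj0]
        · simp [Function.update_of_ne hne]
      rw [hv, AlternatingMap.map_update_add, AlternatingMap.map_update_smul, hupd1, hupd2,
        ih a, ih (Function.update a j0 w)]
      have hzero : ∀ j ∈ s, c j • F (Function.update (Function.update a j0 w) j w) = 0 := by
        intro j hj
        have hne : j0 ≠ j := fun h => hj0 (h ▸ hj)
        rw [F.map_eq_zero_of_eq _ (i := j0) (j := j) (by
          rw [Function.update_of_ne hne, Function.update_self, Function.update_self]) hne,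
          smul_zero]
      rw [Finset.sum_eq_zero hzero, add_zero, Finset.sum_insert hj0]
      abel
  have := main Finset.univ a
  simpa using this

lemma iMulti_succAbove {N : Type*} [AddCommGroup N] [Module ℚ N] :
    ∀ {m : ℕ} (x : Fin (m+1) → N) (i : Fin (m+1)),
    ιMulti ℚ (m+1) x
      = ((-1:ℚ)^(i:ℕ)) • (ι ℚ (x i) * ιMulti ℚ m (x ∘ i.succAbove)) := by
  intro m
  induction m with
  | zero =>
    intro x i
    have : i = 0 := Fin.fin_one_eq_zero i
    subst this
    rw [ιMulti_succ_apply]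
    simp [Matrix.vecTail, Function.comp_def]
  | succ m ih =>
    intro x i
    induction i using Fin.cases with
    | zero =>
      rw [ιMulti_succ_apply]
      simp [Matrix.vecTail, Function.comp_def]
    | succ i' =>
      rw [ιMulti_succ_apply, ih (Matrix.vecTail x) i']
      have h1 : Matrix.vecTail x i' = x i'.succ := rfl
      have h2 : x ∘ (i'.succ).succAbove
          = Matrix.vecCons (x 0) (Matrix.vecTail x ∘ i'.succAbove) := by
        funext j
        induction j using Fin.cases with
        | zero => simp [Fin.succ_succAbove_zero]
        | succ j' => simp [Fin.succ_succAbove_succ, Matrix.vecTail, Function.comp_def]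
      rw [h2, ιMulti_succ_apply (v := Matrix.vecCons (x 0) (Matrix.vecTail x ∘ i'.succAbove))]
      simp only [Matrix.cons_val_zero, Matrix.tail_cons, h1]
      rw [mul_smul_comm]
      rw [show ι ℚ (x 0) * (ι ℚ (x i'.succ) * ιMulti ℚ m (Matrix.vecTail x ∘ i'.succAbove))
          = -(ι ℚ (x i'.succ) * (ι ℚ (x 0) * ιMulti ℚ m (Matrix.vecTail x ∘ i'.succAbove)))
        from by
          rw [← mul_assoc, ← mul_assoc, ← neg_mul,
            eq_neg_of_add_eq_zero_left (ι_add_mul_swap (x 0) (x i'.succ))]]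
      rw [Fin.val_succ, pow_succ, smul_neg]
      module

lemma iMulti_update {N : Type*} [AddCommGroup N] [Module ℚ N] {m : ℕ}
    (x : Fin (m+1) → N) (j : Fin (m+1)) (w : N) :
    ιMulti ℚ (m+1) (Function.update x j w)
      = ((-1:ℚ)^(j:ℕ)) • (ι ℚ w * ιMulti ℚ m (x ∘ j.succAbove)) := by
  rw [iMulti_succAbove (Function.update x j w) j, Function.update_self,
    show Function.update x j w ∘ j.succAbove = x ∘ j.succAbove from
      funext fun t => Function.update_of_ne (Fin.succAbove_ne j t) _ _]

end Helpers

/-- The wedge `f 0 ∧ ⋯ ∧ f (q-1)` as an element of the `q`-th exterior power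
of a `ℚ`-vector space. -/
noncomputable def wedge {M : Type*} [AddCommGroup M] [Module ℚ M] (q : ℕ) (f : Fin q → M) :
    ⋀[ℚ]^q M :=
  ⟨ExteriorAlgebra.ιMulti ℚ q f, ExteriorAlgebra.ιMulti_range ℚ q ⟨f, rfl⟩⟩

/-- `R : ⋀^{n+1} M → ⋀^n M'` is the residue map `Res_{ν,φ}` iff it takes the defining
values on wedges. -/
def IsResMap {M M' : Type*} [AddCommGroup M] [Module ℚ M] [AddCommGroup M'] [Module ℚ M']
    (n : ℕ) (ν : M →ₗ[ℚ] ℚ) (φ : M →ₗ[ℚ] M')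
    (R : (⋀[ℚ]^(n + 1) M) →ₗ[ℚ] (⋀[ℚ]^n M')) : Prop :=
  ∀ f : Fin (n + 1) → M,
    R (wedge (n + 1) f) =
      ∑ i : Fin (n + 1), ((-1 : ℚ) ^ (i : ℕ) * ν (f i)) •
        wedge n (fun j => φ (f (i.succAbove j)))

lemma wedge_coe {M : Type*} [AddCommGroup M] [Module ℚ M] (q : ℕ) (f : Fin q → M) :
    (wedge q f : ExteriorAlgebra ℚ M) = ιMulti ℚ q f := rfl

lemma wedge_span {M : Type*} [AddCommGroup M] [Module ℚ M] (q : ℕ) :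
    Submodule.span ℚ (Set.range (wedge q (M := M))) = ⊤ := by
  apply Submodule.map_injective_of_injective (Submodule.injective_subtype (⋀[ℚ]^q M))
  rw [Submodule.map_span, Submodule.map_top, Submodule.range_subtype]
  rw [← Set.range_comp]
  have : (⋀[ℚ]^q M).subtype ∘ wedge q = ⇑(ιMulti ℚ q) := rfl
  rw [this, ιMulti_span_fixedDegree]

/-- replacing `φ` by `φ' = φ + ν(·)·w` does not change the residue map:
`Res_{ν,φ'} = Res_{ν,φ}` as linear maps `⋀^{n+1} M → ⋀^n M'`. -/
theorem statement_2 {M M' : Type*} [AddCommGroup M] [Module ℚ M]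
    [AddCommGroup M'] [Module ℚ M']
    (ν : M →ₗ[ℚ] ℚ) (φ : M →ₗ[ℚ] M') (n : ℕ) (w : M')
    (R R' : (⋀[ℚ]^(n + 1) M) →ₗ[ℚ] (⋀[ℚ]^n M'))
    (hR : IsResMap n ν φ R)
    (hR' : IsResMap n ν (φ + ν.smulRight w) R') :
    R' = R := by
  refine LinearMap.ext_on (wedge_span (n+1)) ?_
  rintro _ ⟨f, rfl⟩
  rw [hR f, hR' f]
  refine Subtype.coe_injective ?_
  push_cast [AddSubmonoidClass.coe_finset_sum, SetLike.val_smul, wedge_coe]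
  simp only [LinearMap.add_apply, LinearMap.smulRight_apply]
  have expand : ∀ i : Fin (n+1),
      ιMulti ℚ n (fun j => φ (f (i.succAbove j)) + ν (f (i.succAbove j)) • w)
        = ιMulti ℚ n (fun j => φ (f (i.succAbove j)))
          + ∑ j, ν (f (i.succAbove j)) •
              ιMulti ℚ n (Function.update (fun j => φ (f (i.succAbove j))) j w) := by
    intro i
    exact alt_expand (ιMulti ℚ n) w (fun j => ν (f (i.succAbove j)))
      (fun j => φ (f (i.succAbove j)))
  calc ∑ i : Fin (n+1), ((-1 : ℚ) ^ (i : ℕ) * ν (f i)) •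
        ιMulti ℚ n (fun j => φ (f (i.succAbove j)) + ν (f (i.succAbove j)) • w)
      = ∑ i : Fin (n+1), (((-1 : ℚ) ^ (i : ℕ) * ν (f i)) •
          ιMulti ℚ n (fun j => φ (f (i.succAbove j)))
        + ((-1 : ℚ) ^ (i : ℕ) * ν (f i)) • ∑ j, ν (f (i.succAbove j)) •
            ιMulti ℚ n (Function.update (fun j => φ (f (i.succAbove j))) j w)) := by
        refine Finset.sum_congr rfl fun i _ => ?_
        rw [expand i, smul_add]
    _ = ∑ i : Fin (n+1), ((-1 : ℚ) ^ (i : ℕ) * ν (f i)) •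
          ιMulti ℚ n (fun j => φ (f (i.succAbove j)))
        + ∑ i : Fin (n+1), ((-1 : ℚ) ^ (i : ℕ) * ν (f i)) • ∑ j, ν (f (i.succAbove j)) •
            ιMulti ℚ n (Function.update (fun j => φ (f (i.succAbove j))) j w) := by
        rw [Finset.sum_add_distrib]
    _ = ∑ i : Fin (n+1), ((-1 : ℚ) ^ (i : ℕ) * ν (f i)) •
          ιMulti ℚ n (fun j => φ (f (i.succAbove j))) := by
        rw [add_eq_left]
        match n with
        | 0 => simp
        | (m+1) =>
          have step : ∀ (i : Fin (m+2)),
              ((-1 : ℚ) ^ (i : ℕ) * ν (f i)) • ∑ j, ν (f (i.succAbove j)) •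
                ιMulti ℚ (m+1) (Function.update (fun j => φ (f (i.succAbove j))) j w)
              = ∑ j : Fin (m+1),
                  (((-1 : ℚ) ^ (i : ℕ) * ν (f i)) * (ν (f (i.succAbove j)) * (-1)^(j:ℕ))) •
                    (ι ℚ w * ιMulti ℚ m (fun t => φ (f (i.succAbove (j.succAbove t))))) := by
            intro i
            rw [Finset.smul_sum]
            refine Finset.sum_congr rfl fun j _ => ?_
            rw [iMulti_update]
            have hc : ((fun j => φ (f (i.succAbove j))) ∘ j.succAbove)
                = fun t => φ (f (i.succAbove (j.succAbove t))) := rfl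
            rw [hc, smul_smul, smul_smul]
            congr 1
            ring
          rw [Finset.sum_congr rfl fun i _ => step i, ← Fintype.sum_prod_type']
          refine Finset.sum_ninvolution (fun p => (p.1.succAbove p.2, swapJ p.1 p.2))
            ?_ (fun p _ h => Fin.succAbove_ne p.1 p.2 (congrArg Prod.fst h))
            (fun _ => Finset.mem_univ _)
            (fun p => Prod.ext (swap_spec1 p.1 p.2) (swap_spec2 p.1 p.2))
          rintro ⟨i, j⟩
          dsimp only
          rw [swap_spec1 i j]
          rw [show (fun t => φ (f ((i.succAbove j).succAbove ((swapJ i j).succAbove t))))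
              = fun t => φ (f (i.succAbove (j.succAbove t))) from
            funext fun t => congrArg (fun z => φ (f z)) (congrFun (swap_comp i j) t).symm]
          rw [← add_smul]
          have hcoef : ((-1 : ℚ) ^ (i : ℕ) * ν (f i) * (ν (f (i.succAbove j)) * (-1)^(j:ℕ)))
              + ((-1 : ℚ) ^ ((i.succAbove j : Fin (m+2)) : ℕ) * ν (f (i.succAbove j))
                  * (ν (f i) * (-1)^((swapJ i j : Fin (m+1)):ℕ))) = 0 := by
            have h3 := swap_spec3 i j
            linear_combination ν (f i) * ν (f (i.succAbove j)) * h3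
          rw [hcoef, zero_smul]
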